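/- Let C be a skew monoidal category admitting the right normalization C^I. Then the category of monoids in the skew monoidal category C^I is equivalent (indeed isomorphic) to the category of monoids in C, via the forgetful functor U : C^I → C. -/

import Mathlib

open CategoryTheory

universe w v u v' u'

/-- The data of a skew monoidal structure on a category: tensor product (on objects
and morphisms), unit object, and (not necessarily invertible) associator, left unitor
and right unitor. -/
structure SkewMonoidalData (C : Type u) [Category.{v} C] where
  t : C → C → C
  tH : ∀ {X X' Y Y' : C}, (X ⟶ X') → (Y ⟶ Y') → (t X Y ⟶ t X' Y')
  I : C
  a : ∀ X Y Z : C, t (t X Y) Z ⟶ t X (t Y Z)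
  l : ∀ X : C, t I X ⟶ X
  r : ∀ X : C, X ⟶ t X I

namespace SkewMonoidalData

variable {C : Type u} [Category.{v} C]

/-- The tensor product is functorial in each variable (a bifunctor). -/
class Functorial (S : SkewMonoidalData C) : Prop where
  tH_id : ∀ X Y : C, S.tH (𝟙 X) (𝟙 Y) = 𝟙 (S.t X Y)
  tH_comp : ∀ {X X' X'' Y Y' Y'' : C} (f : X ⟶ X') (f' : X' ⟶ X'') (g : Y ⟶ Y')
    (g' : Y' ⟶ Y''), S.tH (f ≫ f') (g ≫ g') = S.tH f g ≫ S.tH f' g'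

/-- The naturality conditions and five coherence axioms of a skew monoidal category. -/
structure IsSkewMonoidal (S : SkewMonoidalData C) : Prop where
  a_nat : ∀ {X X' Y Y' Z Z' : C} (f : X ⟶ X') (g : Y ⟶ Y') (h : Z ⟶ Z'),
    S.tH (S.tH f g) h ≫ S.a X' Y' Z' = S.a X Y Z ≫ S.tH f (S.tH g h)
  l_nat : ∀ {X Y : C} (f : X ⟶ Y), S.tH (𝟙 S.I) f ≫ S.l Y = S.l X ≫ f
  r_nat : ∀ {X Y : C} (f : X ⟶ Y), f ≫ S.r Y = S.r X ≫ S.tH f (𝟙 S.I)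
  pentagon : ∀ W X Y Z : C,
    S.tH (S.a W X Y) (𝟙 Z) ≫ S.a W (S.t X Y) Z ≫ S.tH (𝟙 W) (S.a X Y Z)
      = S.a (S.t W X) Y Z ≫ S.a W X (S.t Y Z)
  ax2 : ∀ X Y : C, S.tH (S.r X) (𝟙 Y) ≫ S.a X S.I Y ≫ S.tH (𝟙 X) (S.l Y) = 𝟙 (S.t X Y)
  ax3 : ∀ X Y : C, S.a S.I X Y ≫ S.l (S.t X Y) = S.tH (S.l X) (𝟙 Y)
  ax4 : ∀ X Y : C, S.r (S.t X Y) ≫ S.a X Y S.I = S.tH (𝟙 X) (S.r Y)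
  ax5 : S.r S.I ≫ S.l S.I = 𝟙 S.I

end SkewMonoidalData

/-- A right `I`-module in a skew monoidal category: an algebra for the monad
`X ↦ X ⊗ I` with multiplication `(1 ⊗ λ) ∘ α` and unit `ρ`. -/
structure IMod {C : Type u} [Category.{v} C] (S : SkewMonoidalData C) where
  X : C
  act : S.t X S.I ⟶ X
  massoc : S.tH act (𝟙 S.I) ≫ act = S.a X S.I S.I ≫ S.tH (𝟙 X) (S.l S.I) ≫ act
  munit : S.r X ≫ act = 𝟙 X

/-- A morphism of right `I`-modules. -/
@[ext]
structure IModHom {C : Type u} [Category.{v} C] {S : SkewMonoidalData C}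
    (M N : IMod S) where
  f : M.X ⟶ N.X
  comm : S.tH f (𝟙 S.I) ≫ N.act = M.act ≫ f

/-- The category `C^I` of right `I`-modules. -/
instance IMod.category {C : Type u} [Category.{v} C] (S : SkewMonoidalData C)
    [S.Functorial] : Category (IMod S) where
  Hom := IModHom
  id M := ⟨𝟙 M.X, by rw [SkewMonoidalData.Functorial.tH_id]; simp⟩
  comp {M N P} φ ψ := ⟨φ.f ≫ ψ.f, by
    have h : S.tH (φ.f ≫ ψ.f) (𝟙 S.I) = S.tH φ.f (𝟙 S.I) ≫ S.tH ψ.f (𝟙 S.I) := by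
      rw [← SkewMonoidalData.Functorial.tH_comp]; simp
    rw [h, Category.assoc, ψ.comm, ← Category.assoc, φ.comm, Category.assoc]⟩
  id_comp φ := by apply IModHom.ext; simp
  comp_id φ := by apply IModHom.ext; simp
  assoc φ ψ χ := by apply IModHom.ext; simp

@[simp] theorem IMod.id_f {C : Type u} [Category.{v} C] {S : SkewMonoidalData C}
    [S.Functorial] (M : IMod S) : (𝟙 M : M ⟶ M).f = 𝟙 M.X := rfl

@[simp] theorem IMod.comp_f {C : Type u} [Category.{v} C] {S : SkewMonoidalData C}
    [S.Functorial] {M N P : IMod S} (φ : M ⟶ N) (ψ : N ⟶ P) :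
    (φ ≫ ψ).f = φ.f ≫ ψ.f := rfl

/-- The forgetful functor `C^I ⥤ C`. -/
def forgetIMod {C : Type u} [Category.{v} C] (S : SkewMonoidalData C) [S.Functorial] :
    IMod S ⥤ C where
  obj M := M.X
  map φ := φ.f

/-- The unit `I`, with action `λ`, as a right `I`-module. -/
def unitMod {C : Type u} [Category.{v} C] (S : SkewMonoidalData C)
    (hS : S.IsSkewMonoidal) : IMod S where
  X := S.I
  act := S.l S.I
  massoc := by
    rw [hS.l_nat (S.l S.I)]
    rw [← Category.assoc, ← hS.ax3, Category.assoc]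
  munit := hS.ax5

attribute [reducible] unitMod

section Wedge

variable {C : Type u} [Category.{v} C] (S : SkewMonoidalData C)

/-- The first leg `x ⊗ 1` of the reflexive pair whose coequalizer is `M ∧ N`. -/
def coeqPairL (M N : IMod S) : S.t (S.t M.X S.I) N.X ⟶ S.t M.X N.X :=
  S.tH M.act (𝟙 N.X)

/-- The second leg `(1 ⊗ λ) ∘ α` of the reflexive pair whose coequalizer is `M ∧ N`. -/
def coeqPairR (M N : IMod S) : S.t (S.t M.X S.I) N.X ⟶ S.t M.X N.X :=
  S.a M.X S.I N.X ≫ S.tH (𝟙 M.X) (S.l N.X)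

/-- `q : M.X ⊗ N.X ⟶ W` is a coequalizer of the reflexive pair. -/
def IsWedge (M N : IMod S) {W : C} (q : S.t M.X N.X ⟶ W) : Prop :=
  (coeqPairL S M N ≫ q = coeqPairR S M N ≫ q) ∧
  ∀ {Z : C} (h : S.t M.X N.X ⟶ Z), coeqPairL S M N ≫ h = coeqPairR S M N ≫ h →
    ∃! h' : W ⟶ Z, q ≫ h' = h

/-- The coequalizer `q` remains a coequalizer after tensoring on the right with any
object `P`. -/
def IsWedgeTens (M N : IMod S) {W : C} (q : S.t M.X N.X ⟶ W) : Prop :=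
  ∀ P : C,
    (S.tH (coeqPairL S M N) (𝟙 P) ≫ S.tH q (𝟙 P)
      = S.tH (coeqPairR S M N) (𝟙 P) ≫ S.tH q (𝟙 P)) ∧
    ∀ {Z : C} (h : S.t (S.t M.X N.X) P ⟶ Z),
      S.tH (coeqPairL S M N) (𝟙 P) ≫ h = S.tH (coeqPairR S M N) (𝟙 P) ≫ h →
        ∃! h' : S.t W P ⟶ Z, S.tH q (𝟙 P) ≫ h' = h

end Wedge

/-- A monoid in a skew monoidal category: `d` with multiplication `mu` and unit `e`
satisfying associativity and the two unit laws. -/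
def SkewMonoidalData.IsMonoidIn {C : Type u} [Category.{v} C] (S : SkewMonoidalData C)
    (d : C) (mu : S.t d d ⟶ d) (e : S.I ⟶ d) : Prop :=
  S.tH mu (𝟙 d) ≫ mu = S.a d d d ≫ S.tH (𝟙 d) mu ≫ mu ∧
  S.tH e (𝟙 d) ≫ mu = S.l d ∧
  S.r d ≫ S.tH (𝟙 d) e ≫ mu = 𝟙 d
section AuxLemmas

variable {C : Type u} [Category.{v} C] {S : SkewMonoidalData C} [S.Functorial]

theorem tH_comp' {X X' X'' Y Y' Y'' : C} (f : X ⟶ X') (f' : X' ⟶ X'') (g : Y ⟶ Y')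
    (g' : Y' ⟶ Y'') : S.tH (f ≫ f') (g ≫ g') = S.tH f g ≫ S.tH f' g' :=
  SkewMonoidalData.Functorial.tH_comp f f' g g'

theorem tH_id' (X Y : C) : S.tH (𝟙 X) (𝟙 Y) = 𝟙 (S.t X Y) :=
  SkewMonoidalData.Functorial.tH_id X Y

theorem tH_swap {X X' Y Y' : C} (f : X ⟶ X') (g : Y ⟶ Y') :
    S.tH f (𝟙 Y) ≫ S.tH (𝟙 X') g = S.tH f g := by
  rw [← tH_comp', Category.comp_id, Category.id_comp]

theorem tH_swap' {X X' Y Y' : C} (f : X ⟶ X') (g : Y ⟶ Y') :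
    S.tH (𝟙 X) g ≫ S.tH f (𝟙 Y') = S.tH f g := by
  rw [← tH_comp', Category.comp_id, Category.id_comp]

theorem tH_compl {X X' X'' : C} (f : X ⟶ X') (f' : X' ⟶ X'') (Y : C) :
    S.tH (f ≫ f') (𝟙 Y) = S.tH f (𝟙 Y) ≫ S.tH f' (𝟙 Y) := by
  rw [← tH_comp', Category.comp_id]

theorem tH_compr (X : C) {Y Y' Y'' : C} (g : Y ⟶ Y') (g' : Y' ⟶ Y'') :
    S.tH (𝟙 X) (g ≫ g') = S.tH (𝟙 X) g ≫ S.tH (𝟙 X) g' := by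
  rw [← tH_comp', Category.comp_id]

end AuxLemmas

section MonoidMod

variable {C : Type u} [Category.{v} C] (S : SkewMonoidalData C) [S.Functorial]
  (hS : S.IsSkewMonoidal) {X : C} (μ : S.t X X ⟶ X) (e : S.I ⟶ X)

/-- If `(X, μ, e)` is a monoid in `C`, then `tH e e ≫ μ = l I ≫ e`. -/
theorem monoid_tH_e_e (hS : S.IsSkewMonoidal) (hM : S.IsMonoidIn X μ e) : S.tH e e ≫ μ = S.l S.I ≫ e := by
  have h : S.tH e e = S.tH (𝟙 S.I) e ≫ S.tH e (𝟙 X) := by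
    rw [← tH_comp', Category.comp_id, Category.id_comp]
  rw [h, Category.assoc, hM.2.1]
  exact hS.l_nat e

/-- The underlying object of a monoid in `C` is a right `I`-module via `(1 ⊗ e) ≫ μ`. -/
def monoidMod (hS : S.IsSkewMonoidal) (hM : S.IsMonoidIn X μ e) : IMod S where
  X := X
  act := S.tH (𝟙 X) e ≫ μ
  munit := hM.2.2
  massoc := by
    obtain ⟨hM1, hM2, hM3⟩ := hM
    calc S.tH (S.tH (𝟙 X) e ≫ μ) (𝟙 S.I) ≫ (S.tH (𝟙 X) e ≫ μ)
        = S.tH (S.tH (𝟙 X) e) (𝟙 S.I) ≫ (S.tH μ (𝟙 S.I) ≫ S.tH (𝟙 X) e) ≫ μ := by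
          rw [tH_compl]; simp only [Category.assoc]
      _ = S.tH (S.tH (𝟙 X) e) (𝟙 S.I) ≫ (S.tH (𝟙 (S.t X X)) e ≫ S.tH μ (𝟙 X)) ≫ μ := by
          rw [tH_swap, tH_swap']
      _ = (S.tH (S.tH (𝟙 X) e) (𝟙 S.I) ≫ S.tH (𝟙 (S.t X X)) e) ≫ S.tH μ (𝟙 X) ≫ μ := by
          simp only [Category.assoc]
      _ = S.tH (S.tH (𝟙 X) e) e ≫ S.a X X X ≫ S.tH (𝟙 X) μ ≫ μ := by rw [tH_swap, hM1]
      _ = (S.tH (S.tH (𝟙 X) e) e ≫ S.a X X X) ≫ S.tH (𝟙 X) μ ≫ μ := by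
          simp only [Category.assoc]
      _ = (S.a X S.I S.I ≫ S.tH (𝟙 X) (S.tH e e)) ≫ S.tH (𝟙 X) μ ≫ μ := by rw [hS.a_nat]
      _ = S.a X S.I S.I ≫ (S.tH (𝟙 X) (S.tH e e) ≫ S.tH (𝟙 X) μ) ≫ μ := by
          simp only [Category.assoc]
      _ = S.a X S.I S.I ≫ S.tH (𝟙 X) (S.tH e e ≫ μ) ≫ μ := by rw [tH_compr]
      _ = S.a X S.I S.I ≫ S.tH (𝟙 X) (S.l S.I ≫ e) ≫ μ := by
          rw [monoid_tH_e_e S μ e hS ⟨hM1, hM2, hM3⟩]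
      _ = S.a X S.I S.I ≫ S.tH (𝟙 X) (S.l S.I) ≫ (S.tH (𝟙 X) e ≫ μ) := by
          rw [tH_compr]; simp only [Category.assoc]

attribute [reducible] monoidMod

end MonoidMod

/-- for a skew monoidal category `C` admitting its right normalization
`C^I`, the category of monoids in `C^I` is isomorphic to the category of monoids in
`C` via the forgetful functor `U`: (a) `U` sends monoids to monoids; (b) every monoid
in `C` arises from a unique monoid in `C^I`; (c) monoid morphisms lift uniquely and
bijectively along `U`. -/
theorem monoids_in_normalization {C : Type u} [Category.{v} C]
    (S : SkewMonoidalData C) [S.Functorial] (hS : S.IsSkewMonoidal)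
    (w : IMod S → IMod S → IMod S)
    (q : ∀ M N : IMod S, S.t M.X N.X ⟶ (w M N).X)
    (tH' : ∀ (M M' N N' : IMod S), (M ⟶ M') → (N ⟶ N') → (w M N ⟶ w M' N'))
    (a' : ∀ M N P : IMod S, w (w M N) P ⟶ w M (w N P))
    (l' : ∀ M : IMod S, w (unitMod S hS) M ⟶ M)
    (r' : ∀ M : IMod S, M ⟶ w M (unitMod S hS))
    (hq : ∀ M N : IMod S, IsWedge S M N (q M N) ∧ IsWedgeTens S M N (q M N))
    (hlift : ∀ M N : IMod S,
      S.tH (q M N) (𝟙 S.I) ≫ (w M N).act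
        = S.a M.X N.X S.I ≫ S.tH (𝟙 M.X) N.act ≫ q M N)
    (htH : ∀ (M M' N N' : IMod S) (φ : M ⟶ M') (ψ : N ⟶ N'),
      q M N ≫ (tH' M M' N N' φ ψ).f = S.tH φ.f ψ.f ≫ q M' N')
    (ha : ∀ M N P : IMod S,
      S.tH (q M N) (𝟙 P.X) ≫ q (w M N) P ≫ (a' M N P).f
        = S.a M.X N.X P.X ≫ S.tH (𝟙 M.X) (q N P) ≫ q M (w N P))
    (hl : ∀ M : IMod S, q (unitMod S hS) M ≫ (l' M).f = S.l M.X)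
    (hr : ∀ M : IMod S, (r' M).f = S.r M.X ≫ q M (unitMod S hS))
    (hfun : (SkewMonoidalData.mk w (fun {M M' N N'} φ ψ => tH' M M' N N' φ ψ)
      (unitMod S hS) a' l' r').Functorial)
    (hskew : (SkewMonoidalData.mk w (fun {M M' N N'} φ ψ => tH' M M' N N' φ ψ)
      (unitMod S hS) a' l' r').IsSkewMonoidal) :
    letI Sprime := SkewMonoidalData.mk w (fun {M M' N N'} φ ψ => tH' M M' N N' φ ψ)
      (unitMod S hS) a' l' r'
    -- (a) the forgetful functor sends monoids in `C^I` to monoids in `C`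
    (∀ (m : IMod S) (mu : w m m ⟶ m) (e : unitMod S hS ⟶ m),
      Sprime.IsMonoidIn m mu e → S.IsMonoidIn m.X (q m m ≫ mu.f) e.f) ∧
    -- (b) every monoid in `C` arises from a unique monoid in `C^I`
    (∀ (X : C) (μ : S.t X X ⟶ X) (e : S.I ⟶ X), S.IsMonoidIn X μ e →
      ∃! P : Σ' (m : IMod S) (_mu : w m m ⟶ m), unitMod S hS ⟶ m,
        Sprime.IsMonoidIn P.1 P.2.1 P.2.2 ∧
        ∃ h : P.1.X = X,
          eqToHom (show S.t X X = S.t P.1.X P.1.X by rw [h])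
              ≫ q P.1 P.1 ≫ P.2.1.f ≫ eqToHom h = μ ∧
          P.2.2.f ≫ eqToHom h = e) ∧
    -- (c) monoid morphisms lift uniquely along the forgetful functor
    (∀ (m n : IMod S) (mum : w m m ⟶ m) (em : unitMod S hS ⟶ m)
        (mun : w n n ⟶ n) (en : unitMod S hS ⟶ n),
      Sprime.IsMonoidIn m mum em → Sprime.IsMonoidIn n mun en →
      ∀ g : m.X ⟶ n.X,
        S.tH g g ≫ (q n n ≫ mun.f) = (q m m ≫ mum.f) ≫ g → em.f ≫ g = en.f →
        ∃! gbar : m ⟶ n, gbar.f = g ∧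
          tH' m n m n gbar gbar ≫ mun = mum ≫ gbar ∧ em ≫ gbar = en) := by

  have q_epi : ∀ (M N : IMod S) {Z : C} (f g : (w M N).X ⟶ Z),
      q M N ≫ f = q M N ≫ g → f = g := by
    intro M N Z f g hfg
    obtain ⟨hco, huniv⟩ := (hq M N).1
    obtain ⟨h', -, hu⟩ := huniv (q M N ≫ f)
      (by rw [← Category.assoc, hco, Category.assoc])
    exact (hu f rfl).trans (hu g hfg.symm).symm
  have qt_epi : ∀ (M N : IMod S) (P : C) {Z : C} (f g : S.t (w M N).X P ⟶ Z),
      S.tH (q M N) (𝟙 P) ≫ f = S.tH (q M N) (𝟙 P) ≫ g → f = g := by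
    intro M N P Z f g hfg
    obtain ⟨hco, huniv⟩ := (hq M N).2 P
    obtain ⟨h', -, hu⟩ := huniv (S.tH (q M N) (𝟙 P) ≫ f)
      (by rw [← Category.assoc, hco, Category.assoc])
    exact (hu f rfl).trans (hu g hfg.symm).symm
  have partA : ∀ (m : IMod S) (mu : w m m ⟶ m) (e : unitMod S hS ⟶ m),
      tH' (w m m) m m m mu (𝟙 m) ≫ mu = a' m m m ≫ tH' m m (w m m) m (𝟙 m) mu ≫ mu →
      tH' (unitMod S hS) m m m e (𝟙 m) ≫ mu = l' m →
      r' m ≫ tH' m m (unitMod S hS) m (𝟙 m) e ≫ mu = 𝟙 m →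
      S.IsMonoidIn m.X (q m m ≫ mu.f) e.f := by
    intro m mu e h1 h2 h3
    have h1f := congrArg IModHom.f h1
    have h2f := congrArg IModHom.f h2
    have h3f := congrArg IModHom.f h3
    simp only [IMod.comp_f, IMod.id_f] at h1f h2f h3f
    have e1 := htH (w m m) m m m mu (𝟙 m)
    have e2 := htH m m (w m m) m (𝟙 m) mu
    have e3 := htH (unitMod S hS) m m m e (𝟙 m)
    have e4 := htH m m (unitMod S hS) m (𝟙 m) e
    rw [IMod.id_f] at e1 e2 e3 e4
    refine ⟨?_, ?_, ?_⟩
    · calc S.tH (q m m ≫ mu.f) (𝟙 m.X) ≫ (q m m ≫ mu.f)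
          = S.tH (q m m) (𝟙 m.X) ≫ (S.tH mu.f (𝟙 m.X) ≫ q m m) ≫ mu.f := by
            rw [tH_compl]; simp only [Category.assoc]
        _ = S.tH (q m m) (𝟙 m.X) ≫ q (w m m) m
              ≫ (tH' (w m m) m m m mu (𝟙 m)).f ≫ mu.f := by
            rw [← e1]; simp only [Category.assoc]
        _ = S.tH (q m m) (𝟙 m.X) ≫ q (w m m) m
              ≫ (a' m m m).f ≫ (tH' m m (w m m) m (𝟙 m) mu).f ≫ mu.f := by
            rw [h1f]
        _ = (S.tH (q m m) (𝟙 m.X) ≫ q (w m m) m ≫ (a' m m m).f)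
              ≫ (tH' m m (w m m) m (𝟙 m) mu).f ≫ mu.f := by
            simp only [Category.assoc]
        _ = (S.a m.X m.X m.X ≫ S.tH (𝟙 m.X) (q m m) ≫ q m (w m m))
              ≫ (tH' m m (w m m) m (𝟙 m) mu).f ≫ mu.f := by
            rw [ha]
        _ = S.a m.X m.X m.X ≫ S.tH (𝟙 m.X) (q m m)
              ≫ (q m (w m m) ≫ (tH' m m (w m m) m (𝟙 m) mu).f) ≫ mu.f := by
            simp only [Category.assoc]
        _ = S.a m.X m.X m.X ≫ S.tH (𝟙 m.X) (q m m)
              ≫ (S.tH (𝟙 m.X) mu.f ≫ q m m) ≫ mu.f := by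
            rw [e2]
        _ = S.a m.X m.X m.X ≫ S.tH (𝟙 m.X) (q m m ≫ mu.f) ≫ (q m m ≫ mu.f) := by
            rw [tH_compr]; simp only [Category.assoc]
    · calc S.tH e.f (𝟙 m.X) ≫ q m m ≫ mu.f
          = (S.tH e.f (𝟙 m.X) ≫ q m m) ≫ mu.f := by simp only [Category.assoc]
        _ = q (unitMod S hS) m ≫ (tH' (unitMod S hS) m m m e (𝟙 m)).f ≫ mu.f := by
            rw [← e3]; simp only [Category.assoc]
        _ = q (unitMod S hS) m ≫ (l' m).f := by rw [h2f]
        _ = S.l m.X := hl m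
    · calc S.r m.X ≫ S.tH (𝟙 m.X) e.f ≫ q m m ≫ mu.f
          = (S.r m.X ≫ q m (unitMod S hS))
              ≫ (tH' m m (unitMod S hS) m (𝟙 m) e).f ≫ mu.f := by
            rw [← Category.assoc (S.tH (𝟙 m.X) e.f), ← e4]; simp only [Category.assoc]
        _ = (r' m).f ≫ (tH' m m (unitMod S hS) m (𝟙 m) e).f ≫ mu.f := by rw [hr]
        _ = 𝟙 m.X := h3f
  have act_det : ∀ (m : IMod S) (mu : w m m ⟶ m) (e : unitMod S hS ⟶ m),
      r' m ≫ tH' m m (unitMod S hS) m (𝟙 m) e ≫ mu = 𝟙 m →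
      m.act = S.tH (𝟙 m.X) e.f ≫ (q m m ≫ mu.f) := by
    intro m mu e h3
    have h3f := congrArg IModHom.f h3
    simp only [IMod.comp_f, IMod.id_f] at h3f
    have e4 := htH m m (unitMod S hS) m (𝟙 m) e
    rw [IMod.id_f] at e4
    have hrc : S.r m.X ≫ S.tH (𝟙 m.X) e.f ≫ (q m m ≫ mu.f) = 𝟙 m.X := by
      calc S.r m.X ≫ S.tH (𝟙 m.X) e.f ≫ (q m m ≫ mu.f)
          = (S.r m.X ≫ q m (unitMod S hS))
              ≫ (tH' m m (unitMod S hS) m (𝟙 m) e).f ≫ mu.f := by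
            rw [← Category.assoc (S.tH (𝟙 m.X) e.f), ← e4]; simp only [Category.assoc]
        _ = (r' m).f ≫ (tH' m m (unitMod S hS) m (𝟙 m) e).f ≫ mu.f := by rw [hr]
        _ = 𝟙 m.X := h3f
    have hstar : S.tH (q m m ≫ mu.f) (𝟙 S.I) ≫ m.act
        = S.a m.X m.X S.I ≫ S.tH (𝟙 m.X) m.act ≫ (q m m ≫ mu.f) := by
      calc S.tH (q m m ≫ mu.f) (𝟙 S.I) ≫ m.act
          = S.tH (q m m) (𝟙 S.I) ≫ (S.tH mu.f (𝟙 S.I) ≫ m.act) := by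
            rw [tH_compl]; simp only [Category.assoc]
        _ = (S.tH (q m m) (𝟙 S.I) ≫ (w m m).act) ≫ mu.f := by
            rw [mu.comm]; simp only [Category.assoc]
        _ = (S.a m.X m.X S.I ≫ S.tH (𝟙 m.X) m.act ≫ q m m) ≫ mu.f := by rw [hlift]
        _ = S.a m.X m.X S.I ≫ S.tH (𝟙 m.X) m.act ≫ (q m m ≫ mu.f) := by
            simp only [Category.assoc]
    have ecomm : S.tH e.f (𝟙 S.I) ≫ m.act = S.l S.I ≫ e.f := e.comm
    have hcc : S.tH (S.tH (𝟙 m.X) e.f ≫ (q m m ≫ mu.f)) (𝟙 S.I) ≫ m.act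
        = S.a m.X S.I S.I ≫ S.tH (𝟙 m.X) (S.l S.I)
            ≫ (S.tH (𝟙 m.X) e.f ≫ (q m m ≫ mu.f)) := by
      calc S.tH (S.tH (𝟙 m.X) e.f ≫ (q m m ≫ mu.f)) (𝟙 S.I) ≫ m.act
          = S.tH (S.tH (𝟙 m.X) e.f) (𝟙 S.I) ≫ (S.tH (q m m ≫ mu.f) (𝟙 S.I) ≫ m.act) := by
            rw [tH_compl]; simp only [Category.assoc]
        _ = (S.tH (S.tH (𝟙 m.X) e.f) (𝟙 S.I) ≫ S.a m.X m.X S.I)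
              ≫ S.tH (𝟙 m.X) m.act ≫ (q m m ≫ mu.f) := by
            rw [hstar]; simp only [Category.assoc]
        _ = (S.a m.X S.I S.I ≫ S.tH (𝟙 m.X) (S.tH e.f (𝟙 S.I)))
              ≫ S.tH (𝟙 m.X) m.act ≫ (q m m ≫ mu.f) := by rw [hS.a_nat]
        _ = S.a m.X S.I S.I ≫ S.tH (𝟙 m.X) (S.tH e.f (𝟙 S.I) ≫ m.act)
              ≫ (q m m ≫ mu.f) := by
            rw [tH_compr]; simp only [Category.assoc]
        _ = S.a m.X S.I S.I ≫ S.tH (𝟙 m.X) (S.l S.I ≫ e.f) ≫ (q m m ≫ mu.f) := by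
            rw [ecomm]
        _ = S.a m.X S.I S.I ≫ S.tH (𝟙 m.X) (S.l S.I)
              ≫ (S.tH (𝟙 m.X) e.f ≫ (q m m ≫ mu.f)) := by
            rw [tH_compr]; simp only [Category.assoc]
    have key : S.tH (S.r m.X) (𝟙 S.I)
        ≫ S.tH (S.tH (𝟙 m.X) e.f ≫ (q m m ≫ mu.f)) (𝟙 S.I) ≫ m.act = m.act := by
      rw [← Category.assoc, ← tH_compl, hrc, tH_id', Category.id_comp]
    calc m.act
        = S.tH (S.r m.X) (𝟙 S.I)
            ≫ S.tH (S.tH (𝟙 m.X) e.f ≫ (q m m ≫ mu.f)) (𝟙 S.I) ≫ m.act := key.symm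
      _ = (S.tH (S.r m.X) (𝟙 S.I) ≫ S.a m.X S.I S.I ≫ S.tH (𝟙 m.X) (S.l S.I))
            ≫ (S.tH (𝟙 m.X) e.f ≫ (q m m ≫ mu.f)) := by
          rw [hcc]; simp only [Category.assoc]
      _ = 𝟙 (S.t m.X S.I) ≫ (S.tH (𝟙 m.X) e.f ≫ (q m m ≫ mu.f)) := by rw [hS.ax2]
      _ = S.tH (𝟙 m.X) e.f ≫ (q m m ≫ mu.f) := Category.id_comp _
  refine ⟨fun m mu e hmon => partA m mu e hmon.1 hmon.2.1 hmon.2.2, ?_, ?_⟩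
  · -- (b)
    intro X μ e hM
    have hM1 := hM.1
    have hM2 := hM.2.1
    have hM3 := hM.2.2
    have hee := monoid_tH_e_e S μ e hS hM
    set m₀ : IMod S := monoidMod S μ e hS hM with hm₀
    have hcoeq : coeqPairL S m₀ m₀ ≫ μ = coeqPairR S m₀ m₀ ≫ μ := by
      show S.tH (S.tH (𝟙 X) e ≫ μ) (𝟙 X) ≫ μ = (S.a X S.I X ≫ S.tH (𝟙 X) (S.l X)) ≫ μ
      calc S.tH (S.tH (𝟙 X) e ≫ μ) (𝟙 X) ≫ μ
          = S.tH (S.tH (𝟙 X) e) (𝟙 X) ≫ (S.tH μ (𝟙 X) ≫ μ) := by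
            rw [tH_compl]; simp only [Category.assoc]
        _ = (S.tH (S.tH (𝟙 X) e) (𝟙 X) ≫ S.a X X X) ≫ S.tH (𝟙 X) μ ≫ μ := by
            rw [hM1]; simp only [Category.assoc]
        _ = (S.a X S.I X ≫ S.tH (𝟙 X) (S.tH e (𝟙 X))) ≫ S.tH (𝟙 X) μ ≫ μ := by
            rw [hS.a_nat]
        _ = S.a X S.I X ≫ S.tH (𝟙 X) (S.tH e (𝟙 X) ≫ μ) ≫ μ := by
            rw [tH_compr]; simp only [Category.assoc]
        _ = S.a X S.I X ≫ S.tH (𝟙 X) (S.l X) ≫ μ := by rw [hM2]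
        _ = (S.a X S.I X ≫ S.tH (𝟙 X) (S.l X)) ≫ μ := by simp only [Category.assoc]
    obtain ⟨mu0, hmu0, hmu0u⟩ := (hq m₀ m₀).1.2 μ hcoeq
    have hlift0 : S.tH (q m₀ m₀) (𝟙 S.I) ≫ (w m₀ m₀).act
        = S.a X X S.I ≫ S.tH (𝟙 X) (S.tH (𝟙 X) e ≫ μ) ≫ q m₀ m₀ := hlift m₀ m₀
    have hmucomm : S.tH mu0 (𝟙 S.I) ≫ m₀.act = (w m₀ m₀).act ≫ mu0 := by
      apply qt_epi m₀ m₀ S.I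
      have hAB : S.tH (q m₀ m₀) (𝟙 S.I) ≫ (w m₀ m₀).act ≫ mu0
          = S.a X X S.I ≫ S.tH (𝟙 X) (S.tH (𝟙 X) e ≫ μ) ≫ μ := by
        rw [← Category.assoc, hlift0]; simp only [Category.assoc, hmu0]
      show S.tH (q m₀ m₀) (𝟙 S.I) ≫ S.tH mu0 (𝟙 S.I) ≫ (S.tH (𝟙 X) e ≫ μ)
          = S.tH (q m₀ m₀) (𝟙 S.I) ≫ (w m₀ m₀).act ≫ mu0
      calc S.tH (q m₀ m₀) (𝟙 S.I) ≫ S.tH mu0 (𝟙 S.I) ≫ (S.tH (𝟙 X) e ≫ μ)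
          = S.tH μ (𝟙 S.I) ≫ (S.tH (𝟙 X) e ≫ μ) := by
            rw [← Category.assoc, ← tH_compl, hmu0]
        _ = (S.tH μ (𝟙 S.I) ≫ S.tH (𝟙 X) e) ≫ μ := by simp only [Category.assoc]
        _ = (S.tH (𝟙 (S.t X X)) e ≫ S.tH μ (𝟙 X)) ≫ μ := by rw [tH_swap, tH_swap']
        _ = S.tH (𝟙 (S.t X X)) e ≫ S.a X X X ≫ S.tH (𝟙 X) μ ≫ μ := by
            simp only [Category.assoc]; rw [hM1]
        _ = (S.tH (S.tH (𝟙 X) (𝟙 X)) e ≫ S.a X X X) ≫ S.tH (𝟙 X) μ ≫ μ := by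
            rw [tH_id']; simp only [Category.assoc]
        _ = (S.a X X S.I ≫ S.tH (𝟙 X) (S.tH (𝟙 X) e)) ≫ S.tH (𝟙 X) μ ≫ μ := by
            rw [hS.a_nat]
        _ = S.a X X S.I ≫ S.tH (𝟙 X) (S.tH (𝟙 X) e ≫ μ) ≫ μ := by
            rw [tH_compr]; simp only [Category.assoc]
        _ = S.tH (q m₀ m₀) (𝟙 S.I) ≫ (w m₀ m₀).act ≫ mu0 := hAB.symm
    have he₀comm : S.tH e (𝟙 S.I) ≫ m₀.act = (unitMod S hS).act ≫ e := by
      show S.tH e (𝟙 S.I) ≫ (S.tH (𝟙 X) e ≫ μ) = S.l S.I ≫ e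
      rw [← Category.assoc, tH_swap]; exact hee
    set mu' : w m₀ m₀ ⟶ m₀ := ⟨mu0, hmucomm⟩ with hmu'def
    set e₀ : unitMod S hS ⟶ m₀ := ⟨e, he₀comm⟩ with he₀def
    have hmuf : mu'.f = mu0 := rfl
    have he₀f : e₀.f = e := rfl
    have et1 : q (w m₀ m₀) m₀ ≫ (tH' (w m₀ m₀) m₀ m₀ m₀ mu' (𝟙 m₀)).f
        = S.tH mu0 (𝟙 X) ≫ q m₀ m₀ := htH _ _ _ _ _ _
    have et2 : q m₀ (w m₀ m₀) ≫ (tH' m₀ m₀ (w m₀ m₀) m₀ (𝟙 m₀) mu').f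
        = S.tH (𝟙 X) mu0 ≫ q m₀ m₀ := htH _ _ _ _ _ _
    have et3 : q (unitMod S hS) m₀ ≫ (tH' (unitMod S hS) m₀ m₀ m₀ e₀ (𝟙 m₀)).f
        = S.tH e (𝟙 X) ≫ q m₀ m₀ := htH _ _ _ _ _ _
    have et4 : q m₀ (unitMod S hS) ≫ (tH' m₀ m₀ (unitMod S hS) m₀ (𝟙 m₀) e₀).f
        = S.tH (𝟙 X) e ≫ q m₀ m₀ := htH _ _ _ _ _ _
    have ha0 : S.tH (q m₀ m₀) (𝟙 X) ≫ q (w m₀ m₀) m₀ ≫ (a' m₀ m₀ m₀).f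
        = S.a X X X ≫ S.tH (𝟙 X) (q m₀ m₀) ≫ q m₀ (w m₀ m₀) := ha m₀ m₀ m₀
    have hl0 : q (unitMod S hS) m₀ ≫ (l' m₀).f = S.l X := hl m₀
    have hr0 : (r' m₀).f = S.r X ≫ q m₀ (unitMod S hS) := hr m₀
    have hlaw1 : tH' (w m₀ m₀) m₀ m₀ m₀ mu' (𝟙 m₀) ≫ mu'
        = a' m₀ m₀ m₀ ≫ tH' m₀ m₀ (w m₀ m₀) m₀ (𝟙 m₀) mu' ≫ mu' := by
      apply IModHom.ext
      simp only [IMod.comp_f]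
      apply q_epi (w m₀ m₀) m₀
      apply qt_epi m₀ m₀ m₀.X
      calc S.tH (q m₀ m₀) (𝟙 m₀.X) ≫ q (w m₀ m₀) m₀
              ≫ (tH' (w m₀ m₀) m₀ m₀ m₀ mu' (𝟙 m₀)).f ≫ mu'.f
          = S.tH (q m₀ m₀) (𝟙 X) ≫ (S.tH mu0 (𝟙 X) ≫ q m₀ m₀) ≫ mu0 := by
            rw [hmuf, ← Category.assoc (q (w m₀ m₀) m₀), et1]
        _ = S.tH (q m₀ m₀ ≫ mu0) (𝟙 X) ≫ (q m₀ m₀ ≫ mu0) := by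
            rw [tH_compl]; simp only [Category.assoc]
        _ = S.tH μ (𝟙 X) ≫ μ := by rw [hmu0]
        _ = S.a X X X ≫ S.tH (𝟙 X) μ ≫ μ := hM1
        _ = S.a X X X ≫ S.tH (𝟙 X) (q m₀ m₀ ≫ mu0) ≫ (q m₀ m₀ ≫ mu0) := by rw [hmu0]
        _ = S.a X X X ≫ S.tH (𝟙 X) (q m₀ m₀) ≫ (S.tH (𝟙 X) mu0 ≫ q m₀ m₀) ≫ mu0 := by
            rw [tH_compr]; simp only [Category.assoc]
        _ = (S.a X X X ≫ S.tH (𝟙 X) (q m₀ m₀) ≫ q m₀ (w m₀ m₀))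
              ≫ (tH' m₀ m₀ (w m₀ m₀) m₀ (𝟙 m₀) mu').f ≫ mu0 := by
            rw [← et2]; simp only [Category.assoc]
        _ = S.tH (q m₀ m₀) (𝟙 m₀.X) ≫ q (w m₀ m₀) m₀
              ≫ (a' m₀ m₀ m₀).f ≫ (tH' m₀ m₀ (w m₀ m₀) m₀ (𝟙 m₀) mu').f ≫ mu'.f := by
            rw [hmuf, ← ha0]; simp only [Category.assoc]; exact rfl
    have hlaw2 : tH' (unitMod S hS) m₀ m₀ m₀ e₀ (𝟙 m₀) ≫ mu' = l' m₀ := by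
      apply IModHom.ext
      simp only [IMod.comp_f]
      apply q_epi (unitMod S hS) m₀
      calc q (unitMod S hS) m₀ ≫ (tH' (unitMod S hS) m₀ m₀ m₀ e₀ (𝟙 m₀)).f ≫ mu'.f
          = (S.tH e (𝟙 X) ≫ q m₀ m₀) ≫ mu0 := by
            rw [hmuf, ← Category.assoc, et3]
        _ = S.tH e (𝟙 X) ≫ μ := by rw [Category.assoc, hmu0]
        _ = S.l X := hM2
        _ = q (unitMod S hS) m₀ ≫ (l' m₀).f := hl0.symm
    have hlaw3 : r' m₀ ≫ tH' m₀ m₀ (unitMod S hS) m₀ (𝟙 m₀) e₀ ≫ mu' = 𝟙 m₀ := by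
      apply IModHom.ext
      simp only [IMod.comp_f, IMod.id_f]
      calc (r' m₀).f ≫ (tH' m₀ m₀ (unitMod S hS) m₀ (𝟙 m₀) e₀).f ≫ mu'.f
          = (S.r X ≫ q m₀ (unitMod S hS))
              ≫ (tH' m₀ m₀ (unitMod S hS) m₀ (𝟙 m₀) e₀).f ≫ mu0 := by
            rw [hr0, hmuf]
        _ = S.r X ≫ (S.tH (𝟙 X) e ≫ q m₀ m₀) ≫ mu0 := by
            simp only [Category.assoc]
            rw [← Category.assoc (q m₀ (unitMod S hS)), et4]
            simp only [Category.assoc]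
        _ = S.r X ≫ S.tH (𝟙 X) e ≫ μ := by simp only [Category.assoc, hmu0]
        _ = 𝟙 X := hM3
    have hgen1 : ∀ (p : S.t X X = S.t m₀.X m₀.X) (p2 : m₀.X = X),
        eqToHom p ≫ q m₀ m₀ ≫ mu'.f ≫ eqToHom p2 = μ := by
      intro p p2
      have hstep : eqToHom p ≫ q m₀ m₀ ≫ mu'.f ≫ eqToHom p2
          = 𝟙 (S.t X X) ≫ q m₀ m₀ ≫ mu0 ≫ 𝟙 X := rfl
      rw [hstep, Category.id_comp, Category.comp_id]
      exact hmu0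
    have hgen2 : ∀ (p2 : m₀.X = X), e₀.f ≫ eqToHom p2 = e := by
      intro p2
      have hstep2 : e₀.f ≫ eqToHom p2 = e ≫ 𝟙 X := rfl
      rw [hstep2, Category.comp_id]
    refine ⟨⟨m₀, mu', e₀⟩, ⟨⟨hlaw1, hlaw2, hlaw3⟩, rfl, hgen1 _ _, hgen2 _⟩, ?_⟩
    rintro ⟨m1, mu1, e1'⟩ ⟨hmon1, hX1, hμ1, he1⟩
    obtain ⟨X1, act1, hma1, hmu1⟩ := m1
    have hX1' : X1 = X := hX1
    subst hX1'
    simp only [eqToHom_refl, Category.id_comp, Category.comp_id] at hμ1 he1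
    have hactd : act1 = S.tH (𝟙 X1) e1'.f
        ≫ (q (IMod.mk X1 act1 hma1 hmu1) (IMod.mk X1 act1 hma1 hmu1) ≫ mu1.f) :=
      act_det (IMod.mk X1 act1 hma1 hmu1) mu1 e1' hmon1.2.2
    have hact1 : act1 = S.tH (𝟙 X1) e ≫ μ := by
      rw [← hμ1, ← he1]; exact hactd
    subst hact1
    have hmu1f : mu1.f = mu0 := hmu0u mu1.f hμ1
    have hmu1' : mu1 = mu' := IModHom.ext hmu1f
    have he1'' : e1' = e₀ := IModHom.ext he1
    subst hmu1'
    subst he1''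
    rfl
  · -- (c)
    intro m n mum em mun en hm hn g hgmul hge
    have hmact := act_det m mum em hm.2.2
    have hnact := act_det n mun en hn.2.2
    have hcomm : S.tH g (𝟙 S.I) ≫ n.act = m.act ≫ g := by
      rw [hmact, hnact]
      calc S.tH g (𝟙 S.I) ≫ S.tH (𝟙 n.X) en.f ≫ (q n n ≫ mun.f)
          = S.tH g en.f ≫ (q n n ≫ mun.f) := by rw [← Category.assoc, tH_swap]
        _ = (S.tH (𝟙 m.X) em.f ≫ S.tH g g) ≫ (q n n ≫ mun.f) := by
            rw [← hge, show S.tH g (em.f ≫ g) = S.tH (𝟙 m.X ≫ g) (em.f ≫ g) by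
              rw [Category.id_comp], tH_comp']
        _ = S.tH (𝟙 m.X) em.f ≫ (q m m ≫ mum.f) ≫ g := by
            simp only [Category.assoc]; rw [hgmul]; simp only [Category.assoc]
        _ = (S.tH (𝟙 m.X) em.f ≫ (q m m ≫ mum.f)) ≫ g := by simp only [Category.assoc]
    have et := htH m n m n ⟨g, hcomm⟩ ⟨g, hcomm⟩
    refine ⟨⟨g, hcomm⟩, ⟨rfl, ?_, ?_⟩, ?_⟩
    · apply IModHom.ext
      simp only [IMod.comp_f]
      apply q_epi m m
      calc q m m ≫ (tH' m n m n ⟨g, hcomm⟩ ⟨g, hcomm⟩).f ≫ mun.f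
          = (S.tH g g ≫ q n n) ≫ mun.f := by
            rw [← Category.assoc]
            exact congrArg (fun z => z ≫ mun.f) et
        _ = (q m m ≫ mum.f) ≫ g := by rw [Category.assoc]; exact hgmul
        _ = q m m ≫ mum.f ≫ g := by simp only [Category.assoc]
    · exact IModHom.ext hge
    · rintro gb ⟨hgbf, -, -⟩
      exact IModHom.ext hgbf
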